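/- arXiv:2302.14280 — 2 statements merged into one kernel-verified Lean document; each statement's English description precedes it below -/
import Mathlib

section
/- For every Pierce sequence σ ∈ Σ, the error-sum E*(σ) = Σ_{n=1}^∞ (φ(σ) - φ_n(σ)) equals Σ_{n=1}^∞ (-1)^n · n / (σ_1···σ_{n+1}). -/
open scoped BigOperators

/-- Reciprocal of an extended natural number as a real, with `1/∞ = 0`. -/
noncomputable def pinv (a : ℕ∞) : ℝ := ((a.toNat : ℕ) : ℝ)⁻¹

/-- First Pierce digit: `⌊1/x⌋` for `x ≠ 0`, and `∞` for `x = 0`. -/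
noncomputable def pd1 (x : ℝ) : ℕ∞ := if x = 0 then ⊤ else (⌊x⁻¹⌋₊ : ℕ∞)

/-- Pierce map `T(x) = 1 - ⌊1/x⌋ x` for `x ≠ 0`, `T(0) = 0`. -/
noncomputable def pT (x : ℝ) : ℝ := if x = 0 then 0 else 1 - (⌊x⁻¹⌋₊ : ℝ) * x

/-- `n`-th Pierce digit `d_n(x) = d_1(T^{n-1} x)` (for `n ≥ 1`). -/
noncomputable def pdig (n : ℕ) (x : ℝ) : ℕ∞ := pd1 (pT^[n-1] x)

/-- `1/(d_1(x) ⋯ d_n(x))`, with the convention that a factor `∞` makes it `0`. -/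
noncomputable def pprodR (n : ℕ) (x : ℝ) : ℝ := ∏ k ∈ Finset.Icc 1 n, pinv (pdig k x)

/-- `n`-th partial sum `s_n(x)` of the Pierce expansion of `x`. -/
noncomputable def psum (n : ℕ) (x : ℝ) : ℝ :=
  ∑ k ∈ Finset.Icc 1 n, (-1 : ℝ) ^ (k + 1) * pprodR k x

/-- The error-sum function of Pierce expansions `E(x) = Σ_{n≥1} (x - s_n(x))`. -/
noncomputable def pE (x : ℝ) : ℝ := ∑' n : ℕ, (x - psum (n + 1) x)

/-- A Pierce sequence (0-indexed: `σ k` is the paper's `σ_{k+1}`): terms are positive, strictly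
increasing while finite, and once a term is `∞` all later terms are `∞`. -/
def IsPierce (σ : ℕ → ℕ∞) : Prop :=
  1 ≤ σ 0 ∧ ∀ n, σ n < σ (n + 1) ∨ (σ n = ⊤ ∧ σ (n + 1) = ⊤)

/-- `n`-th partial sum `φ_n(σ)`. -/
noncomputable def pphiN (n : ℕ) (σ : ℕ → ℕ∞) : ℝ :=
  ∑ k ∈ Finset.range n, (-1 : ℝ) ^ k * ∏ i ∈ Finset.range (k + 1), pinv (σ i)

/-- `φ(σ) = Σ_{k≥1} (-1)^{k+1}/(σ_1 ⋯ σ_k)`. -/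
noncomputable def pphi (σ : ℕ → ℕ∞) : ℝ :=
  ∑' k : ℕ, (-1 : ℝ) ^ k * ∏ i ∈ Finset.range (k + 1), pinv (σ i)

/-- The error-sum function of Pierce sequences `E*(σ) = Σ_{n≥1} (φ(σ) - φ_n(σ))`. -/
noncomputable def pEstar (σ : ℕ → ℕ∞) : ℝ := ∑' n : ℕ, (pphi σ - pphiN (n + 1) σ)

/-- The series formula `Σ_{n≥1} (-1)^n n/(σ_1 ⋯ σ_{n+1})` for the error-sum of a sequence. -/
noncomputable def pEstarSeries (σ : ℕ → ℕ∞) : ℝ :=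
  ∑' n : ℕ, (-1 : ℝ) ^ (n + 1) * (n + 1) * ∏ i ∈ Finset.range (n + 2), pinv (σ i)

/-- The metric `ρ(x,y) = 1/x + 1/y` for `x ≠ y` (with `1/∞ = 0`), `ρ(x,x) = 0`. -/
noncomputable def prho (x y : ℕ∞) : ℝ := if x = y then 0 else pinv x + pinv y

/-- The metric `ρ^ℕ(σ,τ) = Σ_{n≥1} ρ(σ_n, τ_n)/n!` on sequences. -/
noncomputable def prhoN (σ τ : ℕ → ℕ∞) : ℝ :=
  ∑' n : ℕ, prho (σ n) (τ n) / ((n + 1).factorial : ℝ)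

section Aux

variable (σ : ℕ → ℕ∞)

private noncomputable def pa (k : ℕ) : ℝ := ∏ i ∈ Finset.range (k + 1), pinv (σ i)

private noncomputable def pf (k : ℕ) : ℝ := (-1 : ℝ) ^ k * pa σ k

private lemma pinv_nonneg' (a : ℕ∞) : 0 ≤ pinv a := by
  unfold pinv; positivity

private lemma pa_nonneg (k : ℕ) : 0 ≤ pa σ k :=
  Finset.prod_nonneg fun i _ => pinv_nonneg' _

private lemma sigma_ge (hσ : IsPierce σ) : ∀ n, ((n + 1 : ℕ) : ℕ∞) ≤ σ n := by
  intro n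
  induction n with
  | zero => simpa using hσ.1
  | succ n ih =>
    rcases hσ.2 n with h | h
    · have h1 : ((n + 1 : ℕ) : ℕ∞) < σ (n + 1) := lt_of_le_of_lt ih h
      exact Order.add_one_le_of_lt (by exact_mod_cast h1)
    · rw [h.2]; exact le_top

private lemma pinv_le (hσ : IsPierce σ) (n : ℕ) :
    pinv (σ n) ≤ ((n + 1 : ℕ) : ℝ)⁻¹ := by
  rcases eq_or_ne (σ n) ⊤ with h | h
  · simp [pinv, h]; positivity
  · have h1 : ((n + 1 : ℕ) : ℕ∞) ≤ σ n := sigma_ge σ hσ n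
    lift σ n to ℕ using h with m hm
    have h2 : (n + 1 : ℕ) ≤ m := by exact_mod_cast h1
    unfold pinv
    rw [ENat.toNat_coe]
    apply inv_anti₀ (by positivity)
    exact_mod_cast h2

private lemma pa_le (hσ : IsPierce σ) (k : ℕ) :
    pa σ k ≤ (((k + 1).factorial : ℕ) : ℝ)⁻¹ := by
  have h : pa σ k ≤ ∏ i ∈ Finset.range (k + 1), ((i + 1 : ℕ) : ℝ)⁻¹ := by
    apply Finset.prod_le_prod (fun i _ => pinv_nonneg' _) (fun i _ => pinv_le σ hσ i)
  refine h.trans ?_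
  apply le_of_eq
  rw [← Finset.prod_range_add_one_eq_factorial (k + 1), Nat.cast_prod, Finset.prod_inv_distrib]

private lemma summable_inv_factorial : Summable (fun k : ℕ => ((k.factorial : ℕ) : ℝ)⁻¹) := by
  have := Real.summable_pow_div_factorial 1
  simpa [one_div] using this

private lemma summable_pf (hσ : IsPierce σ) : Summable (pf σ) := by
  apply Summable.of_abs
  apply Summable.of_nonneg_of_le (fun k => abs_nonneg _)
    (f := fun k => (((k + 1).factorial : ℕ) : ℝ)⁻¹)
  · intro k
    rw [pf, abs_mul, abs_pow, abs_neg, abs_one, one_pow, one_mul,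
      abs_of_nonneg (pa_nonneg σ k)]
    exact pa_le σ hσ k
  · exact (summable_nat_add_iff 1).2 summable_inv_factorial

private lemma summable_mul_pa (hσ : IsPierce σ) :
    Summable (fun m : ℕ => ((m : ℝ) + 1) * pa σ (m + 1)) := by
  apply Summable.of_nonneg_of_le
    (fun m => mul_nonneg (by positivity) (pa_nonneg σ _))
    (f := fun m => (((m + 1).factorial : ℕ) : ℝ)⁻¹)
  · intro m
    have h1 : ((m : ℝ) + 1) * pa σ (m + 1) ≤ ((m : ℝ) + 1) * (((m + 2).factorial : ℕ) : ℝ)⁻¹ := by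
      apply mul_le_mul_of_nonneg_left (by simpa using pa_le σ hσ (m + 1)) (by positivity)
    refine h1.trans ?_
    rw [show (m + 2).factorial = (m + 2) * (m + 1).factorial from rfl]
    have hm1 : (0 : ℝ) < ((m + 1).factorial : ℕ) := by positivity
    rw [Nat.cast_mul, mul_inv, ← mul_assoc]
    have : ((m : ℝ) + 1) * (((m + 2 : ℕ) : ℝ))⁻¹ ≤ 1 := by
      rw [← le_div_iff₀ (by positivity), one_div, inv_inv]
      push_cast; linarith
    calc ((m : ℝ) + 1) * (((m + 2 : ℕ) : ℝ))⁻¹ * (((m + 1).factorial : ℕ) : ℝ)⁻¹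
        ≤ 1 * (((m + 1).factorial : ℕ) : ℝ)⁻¹ := by
          apply mul_le_mul_of_nonneg_right this (by positivity)
      _ = _ := one_mul _
  · exact (summable_nat_add_iff 1).2 summable_inv_factorial

private noncomputable def sigEquiv : (Σ m : ℕ, Fin (m + 1)) ≃ ℕ × ℕ where
  toFun x := (x.2.1, x.1 - x.2.1)
  invFun p := ⟨p.1 + p.2, ⟨p.1, by omega⟩⟩
  left_inv x := by
    obtain ⟨m, ⟨jv, hjv⟩⟩ := x
    obtain ⟨k, rfl⟩ : ∃ k, m = jv + k := ⟨m - jv, by omega⟩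
    dsimp only
    exact Sigma.ext (show jv + (jv + k - jv) = jv + k by omega)
      ((Fin.heq_ext_iff (show jv + (jv + k - jv) + 1 = jv + k + 1 by omega)).2 rfl)
  right_inv p := by
    obtain ⟨n, k⟩ := p
    simp

private lemma sigEquiv_apply (x : Σ m : ℕ, Fin (m + 1)) (g : ℕ → ℝ) :
    g ((sigEquiv x).2 + (sigEquiv x).1 + 1) = g (x.1 + 1) := by
  obtain ⟨m, j⟩ := x
  have : j.1 ≤ m := Nat.lt_succ_iff.1 j.2
  congr 1
  simp only [sigEquiv, Equiv.coe_fn_mk]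
  omega

private lemma summable_sig (hσ : IsPierce σ) :
    Summable (fun x : Σ m : ℕ, Fin (m + 1) => pf σ (x.1 + 1)) := by
  apply Summable.of_abs
  have habs : ∀ x : Σ m : ℕ, Fin (m + 1), |pf σ (x.1 + 1)| = pa σ (x.1 + 1) := by
    intro x
    rw [pf, abs_mul, abs_pow, abs_neg, abs_one, one_pow, one_mul,
      abs_of_nonneg (pa_nonneg σ _)]
  simp only [habs]
  rw [summable_sigma_of_nonneg (fun x => pa_nonneg σ _)]
  constructor
  · intro m; exact (hasSum_fintype _).summable
  · apply Summable.congr (summable_mul_pa σ hσ)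
    intro m
    rw [tsum_fintype]
    simp [Finset.sum_const, nsmul_eq_mul, mul_comm]

theorem stmt10' (hσ : IsPierce σ) : pEstar σ = pEstarSeries σ := by
  have hpf := summable_pf σ hσ
  have hphi : pphi σ = ∑' k, pf σ k := rfl
  have hphiN : ∀ n, pphiN n σ = ∑ k ∈ Finset.range n, pf σ k := fun n => rfl
  -- tail formula
  have htail : ∀ n : ℕ, pphi σ - pphiN (n + 1) σ = ∑' k, pf σ (k + (n + 1)) := by
    intro n
    rw [hphi, hphiN]
    have := Summable.sum_add_tsum_nat_add (f := pf σ) (n + 1) hpf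
    linarith
  -- summability over the product
  have hF : Summable (fun p : ℕ × ℕ => pf σ (p.2 + p.1 + 1)) := by
    have h1 := summable_sig σ hσ
    have h2 : Summable (fun x : Σ m : ℕ, Fin (m + 1) =>
        (fun p : ℕ × ℕ => pf σ (p.2 + p.1 + 1)) (sigEquiv x)) := by
      apply Summable.congr h1
      intro x
      exact (sigEquiv_apply x (pf σ)).symm
    exact (Equiv.summable_iff sigEquiv).1 h2
  calc pEstar σ = ∑' n : ℕ, ∑' k : ℕ, pf σ (k + n + 1) := by
        unfold pEstar
        apply tsum_congr
        intro n
        rw [htail n]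
        exact tsum_congr fun k => by rw [add_assoc]
    _ = ∑' p : ℕ × ℕ, pf σ (p.2 + p.1 + 1) := (Summable.tsum_prod hF).symm
    _ = ∑' x : Σ m : ℕ, Fin (m + 1), pf σ (x.1 + 1) := by
        rw [← Equiv.tsum_eq sigEquiv (fun p : ℕ × ℕ => pf σ (p.2 + p.1 + 1))]
        exact tsum_congr fun x => sigEquiv_apply x (pf σ)
    _ = ∑' m : ℕ, ∑' j : Fin (m + 1), pf σ (m + 1) := Summable.tsum_sigma (summable_sig σ hσ)
    _ = pEstarSeries σ := by
        unfold pEstarSeries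
        apply tsum_congr
        intro m
        rw [tsum_fintype]
        simp only [Finset.sum_const, Finset.card_univ, Fintype.card_fin, nsmul_eq_mul]
        rw [pf, pa]
        push_cast
        ring

end Aux

theorem stmt10 (σ : ℕ → ℕ∞) (hσ : IsPierce σ) : pEstar σ = pEstarSeries σ := stmt10' σ hσ
end

section
/- The error-sum function E : [0,1] → ℝ of Pierce expansions is not of bounded variation on [0,1]. -/
open scoped BigOperators

open Set

lemma pinv_top : pinv ⊤ = 0 := by simp [pinv]

lemma pinv_coe (k : ℕ) : pinv (k : ℕ∞) = (k : ℝ)⁻¹ := by simp [pinv]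

lemma pT_zero : pT 0 = 0 := by simp [pT]

lemma pT_nonneg {x : ℝ} (hx : 0 < x) (hx1 : x ≤ 1) : 0 ≤ pT x := by
  rw [pT, if_neg hx.ne']
  have h1 : (⌊x⁻¹⌋₊ : ℝ) ≤ x⁻¹ := Nat.floor_le (by positivity)
  have := mul_le_mul_of_nonneg_right h1 hx.le
  rw [inv_mul_cancel₀ hx.ne'] at this
  linarith

lemma pT_lt {x : ℝ} (hx : 0 < x) : pT x < x := by
  rw [pT, if_neg hx.ne']
  have h1 : x⁻¹ < ⌊x⁻¹⌋₊ + 1 := Nat.lt_floor_add_one _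
  have := mul_lt_mul_of_pos_right h1 hx
  rw [inv_mul_cancel₀ hx.ne'] at this
  nlinarith

lemma pT_mem {x : ℝ} (hx : 0 ≤ x) (hx1 : x ≤ 1) : 0 ≤ pT x ∧ pT x ≤ 1 := by
  rcases eq_or_lt_of_le hx with h | h
  · simp [← h, pT_zero]
  · exact ⟨pT_nonneg h hx1, ((pT_lt h).le.trans hx1)⟩

lemma pT_iter_mem {x : ℝ} (hx : 0 ≤ x) (hx1 : x ≤ 1) (n : ℕ) :
    0 ≤ pT^[n] x ∧ pT^[n] x ≤ 1 := by
  induction n with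
  | zero => exact ⟨hx, hx1⟩
  | succ n ih => rw [Function.iterate_succ_apply']; exact pT_mem ih.1 ih.2
lemma pprodR_zero (x : ℝ) : pprodR 0 x = 1 := by simp [pprodR]

lemma psum_zero (x : ℝ) : psum 0 x = 0 := by simp [psum]

lemma pprodR_succ_top (n : ℕ) (x : ℝ) :
    pprodR (n + 1) x = pprodR n x * pinv (pd1 (pT^[n] x)) := by
  rw [pprodR, pprodR, Finset.prod_Icc_succ_top (Nat.le_add_left 1 n)]
  simp [pdig]

lemma psum_succ_top (n : ℕ) (x : ℝ) :
    psum (n + 1) x = psum n x + (-1 : ℝ) ^ (n + 2) * pprodR (n + 1) x := by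
  rw [psum, psum, Finset.sum_Icc_succ_top (Nat.le_add_left 1 n)]

lemma tele {x : ℝ} (hx : 0 ≤ x) (hx1 : x ≤ 1) (n : ℕ) :
    x - psum n x = (-1 : ℝ) ^ n * pprodR n x * pT^[n] x := by
  induction n with
  | zero => simp [psum_zero, pprodR_zero]
  | succ n ih =>
    set y := pT^[n] x with hy
    obtain ⟨hy0, hy1⟩ := pT_iter_mem hx hx1 n
    rw [psum_succ_top, pprodR_succ_top, Function.iterate_succ_apply', ← hy]
    rcases eq_or_lt_of_le hy0 with h0 | h0
    · have hy0' : y = 0 := h0.symm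
      rw [hy0', pd1, if_pos rfl, pinv_top, pT_zero]
      have h2 : x - psum n x = 0 := by rw [ih, hy0']; ring
      linarith [h2]
    · have hd1 : 1 ≤ ⌊y⁻¹⌋₊ := by
        rw [Nat.le_floor_iff (by positivity)]
        exact_mod_cast one_le_inv_iff₀.mpr ⟨h0, hy1⟩
      have hdpos : (0:ℝ) < (⌊y⁻¹⌋₊ : ℝ) := by exact_mod_cast hd1
      rw [pd1, if_neg h0.ne', pT, if_neg h0.ne', pinv_coe]
      have hdd : ((⌊y⁻¹⌋₊:ℝ))⁻¹ * (⌊y⁻¹⌋₊:ℝ) = 1 := inv_mul_cancel₀ hdpos.ne'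
      linear_combination ih - ((-1:ℝ)^n * pprodR n x * y) * hdd
lemma pT_iter_zero' (m : ℕ) : pT^[m] (0:ℝ) = 0 := by
  induction m with
  | zero => rfl
  | succ m ih => rw [Function.iterate_succ_apply, pT_zero]; exact ih

lemma pT_iter_zero {x : ℝ} {l n : ℕ} (hl : pT^[l] x = 0) (hn : l ≤ n) : pT^[n] x = 0 := by
  obtain ⟨m, rfl⟩ := Nat.exists_eq_add_of_le hn
  rw [Nat.add_comm, Function.iterate_add_apply, hl, pT_iter_zero']

lemma term_eq_zero {x : ℝ} (hx : 0 ≤ x) (hx1 : x ≤ 1) {l n : ℕ} (hl : pT^[l] x = 0)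
    (hn : l ≤ n) : x - psum n x = 0 := by
  rw [tele hx hx1 n, pT_iter_zero hl hn, mul_zero]

lemma pE_inv_nat {j : ℕ} (hj : 1 ≤ j) : pE ((j : ℝ)⁻¹) = 0 := by
  have hjpos : (0:ℝ) < j := by exact_mod_cast hj
  have hne : ((j:ℝ)⁻¹) ≠ 0 := by positivity
  have hT : pT ((j:ℝ)⁻¹) = 0 := by
    rw [pT, if_neg hne, inv_inv, Nat.floor_natCast]
    field_simp
    norm_num
  have h1 : pT^[1] ((j:ℝ)⁻¹) = 0 := by simpa using hT
  have hx0 : (0:ℝ) ≤ (j:ℝ)⁻¹ := by positivity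
  have hx1 : ((j:ℝ)⁻¹) ≤ 1 := by
    rw [inv_le_one_iff₀]; right; exact_mod_cast hj
  have : ∀ n : ℕ, ((j:ℝ)⁻¹ - psum (n+1) ((j:ℝ)⁻¹)) = 0 := fun n =>
    term_eq_zero hx0 hx1 h1 (Nat.le_add_left 1 n)
  rw [pE]
  simp [this]

lemma funEq {k : ℕ} (hk : 1 ≤ k) {y : ℝ} (hy0 : 0 < y) (hy1 : y < ((k:ℝ)+1)⁻¹)
    (hD : ∃ l, pT^[l] y = 0) :
    pE ((1 - y)/k) = -((k:ℝ))⁻¹ * (y + pE y) := by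
  have hkpos : (0:ℝ) < k := by exact_mod_cast hk
  have hk1pos : (0:ℝ) < (k:ℝ) + 1 := by linarith
  set x := (1 - y)/k with hxdef
  have hy1' : y < 1 := lt_trans hy1 (by rw [inv_lt_one_iff₀]; right; linarith)
  have hxpos : 0 < x := by apply div_pos; linarith; exact hkpos
  have hxlt : x < (k:ℝ)⁻¹ := by
    rw [div_lt_iff₀ hkpos, inv_mul_cancel₀ hkpos.ne']; linarith
  have hxgt : ((k:ℝ)+1)⁻¹ < x := by
    rw [inv_lt_iff_one_lt_mul₀ hk1pos, hxdef, div_mul_eq_mul_div, lt_div_iff₀ hkpos]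
    have h2 : y * ((k:ℝ)+1) < 1 := by
      have h3 := mul_lt_mul_of_pos_right hy1 hk1pos
      rwa [inv_mul_cancel₀ hk1pos.ne'] at h3
    nlinarith
  -- floor of x⁻¹ is k
  have hfloor : ⌊x⁻¹⌋₊ = k := by
    have h1 : (k:ℝ) ≤ x⁻¹ := by
      rw [le_inv_comm₀ hkpos hxpos]; exact hxlt.le
    have h2 : x⁻¹ < (k:ℝ) + 1 := by
      rw [inv_lt_comm₀ (by positivity) hk1pos]  -- x⁻¹ < k+1 ↔ (k+1)⁻¹ < x
      exact hxgt
    rw [Nat.floor_eq_iff (by positivity)]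
    refine ⟨by exact_mod_cast h1, by push_cast; exact h2⟩
  have hpd1 : pd1 x = (k : ℕ∞) := by rw [pd1, if_neg hxpos.ne', hfloor]
  have hTx : pT x = y := by
    rw [pT, if_neg hxpos.ne', hfloor, hxdef]
    field_simp
    ring
  -- product shift
  have hprod : ∀ j, pprodR (j+1) x = (k:ℝ)⁻¹ * pprodR j y := by
    intro j
    induction j with
    | zero =>
      rw [pprodR_succ_top, pprodR_zero, pprodR_zero]
      simp only [Function.iterate_zero, id_eq, hpd1, pinv_coe]
      ring
    | succ j ih =>
      rw [pprodR_succ_top, ih, pprodR_succ_top]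
      rw [Function.iterate_succ_apply, hTx]
      ring
  have hpsum : ∀ n, psum (n+1) x = (k:ℝ)⁻¹ * (1 - psum n y) := by
    intro n
    induction n with
    | zero =>
      rw [psum_succ_top, psum_zero, psum_zero, hprod 0, pprodR_zero]
      ring
    | succ n ih =>
      rw [psum_succ_top, ih, hprod (n+1), psum_succ_top]
      ring
  have hterm : ∀ n, x - psum (n+1) x = (k:ℝ)⁻¹ * (psum n y - y) := by
    intro n
    rw [hpsum n, hxdef]
    field_simp
    ring
  obtain ⟨l, hl⟩ := hD
  -- l ≥ 1 since y ≠ 0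
  obtain ⟨L, rfl⟩ : ∃ L, l = L + 1 := by
    cases l with
    | zero => exact absurd hl hy0.ne'
    | succ L => exact ⟨L, rfl⟩
  have hterm0 : ∀ n, n ≥ L + 1 → psum n y - y = 0 := by
    intro n hn
    have := term_eq_zero hy0.le hy1'.le hl hn
    linarith
  have hEx : pE x = ∑ n ∈ Finset.range (L+1), (x - psum (n+1) x) := by
    rw [pE]
    apply tsum_eq_sum
    intro n hn
    have hn' : L + 1 ≤ n := Nat.le_of_not_lt (by simpa [Finset.mem_range] using hn)
    rw [hterm n, hterm0 n hn']
    ring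
  have hEy : pE y = ∑ n ∈ Finset.range L, (y - psum (n+1) y) := by
    rw [pE]
    apply tsum_eq_sum
    intro n hn
    have hn' : L ≤ n := Nat.le_of_not_lt (by simpa [Finset.mem_range] using hn)
    have := hterm0 (n+1) (by omega)
    linarith
  rw [hEx, hEy]
  have : ∑ n ∈ Finset.range (L+1), (x - psum (n+1) x)
      = (k:ℝ)⁻¹ * ∑ n ∈ Finset.range (L+1), (psum n y - y) := by
    rw [Finset.mul_sum]
    exact Finset.sum_congr rfl fun n _ => hterm n
  rw [this, Finset.sum_range_succ' (fun n => psum n y - y) L]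
  have hsplit : ∑ i ∈ Finset.range L, (psum (i+1) y - y) = - ∑ i ∈ Finset.range L, (y - psum (i+1) y) := by
    rw [← Finset.sum_neg_distrib]
    exact Finset.sum_congr rfl fun n _ => by ring
  rw [hsplit, psum_zero]
  ring
open scoped ENNReal

def DD : Set ℝ := {x | ∃ l, pT^[l] x = 0}

lemma inv_nat_mem_DD {j : ℕ} (hj : 1 ≤ j) : ((j:ℝ)⁻¹) ∈ DD := by
  have hjpos : (0:ℝ) < j := by exact_mod_cast hj
  have hne : ((j:ℝ)⁻¹) ≠ 0 := by positivity
  refine ⟨1, ?_⟩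
  simp only [Function.iterate_one]
  rw [pT, if_neg hne, inv_inv, Nat.floor_natCast]
  field_simp
  norm_num

noncomputable def G (c : ℕ) : ℝ → ℝ := fun x => (c:ℝ) * x + pE x

noncomputable def VV (c m : ℕ) : ℝ≥0∞ := eVariationOn (G c) (DD ∩ Set.Ioo 0 ((m:ℝ)⁻¹))

lemma evar_affine_le (a b : ℝ) (hb : 0 ≤ b) (g : ℝ → ℝ) (s : Set ℝ) :
    ENNReal.ofReal b * eVariationOn g s ≤ eVariationOn (fun y => a - b * g y) s := by
  rw [eVariationOn, ENNReal.mul_iSup]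
  apply iSup_le
  rintro ⟨n, u, hu, us⟩
  have : ENNReal.ofReal b * ∑ i ∈ Finset.range n, edist (g (u (i+1))) (g (u i))
      = ∑ i ∈ Finset.range n,
        edist ((fun y => a - b * g y) (u (i+1))) ((fun y => a - b * g y) (u i)) := by
    rw [Finset.mul_sum]
    refine Finset.sum_congr rfl fun i _ => ?_
    rw [edist_dist, edist_dist, Real.dist_eq, Real.dist_eq, ← ENNReal.ofReal_mul hb]
    congr 1
    rw [show (a - b*g (u (i+1))) - (a - b*g (u i)) = -(b * (g (u (i+1)) - g (u i))) from by ring,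
      abs_neg, abs_mul, abs_of_nonneg hb]
  rw [this]
  exact eVariationOn.sum_le (n := n) hu us
lemma base (c m : ℕ) (hm : 1 ≤ m) : ENNReal.ofReal ((c:ℝ) / ((m:ℝ)+1)) ≤ VV c m := by
  have hmpos : (0:ℝ) < m := by exact_mod_cast hm
  have key : ∀ N : ℕ,
      ENNReal.ofReal ((c:ℝ) * (((m:ℝ)+1)⁻¹ - ((m:ℝ)+1+(N:ℝ))⁻¹)) ≤ VV c m := by
    intro N
    set u : ℕ → ℝ := fun i => (((m + 1 + (N - i) : ℕ) : ℝ))⁻¹ with hu_def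
    have hden_pos : ∀ i, (0:ℝ) < ((m + 1 + (N - i) : ℕ) : ℝ) := by
      intro i; exact_mod_cast Nat.succ_le_of_lt (by omega)
    have hu_pos : ∀ i, 0 < u i := fun i => by positivity
    have hu : Monotone u := by
      intro i j hij
      have : ((m + 1 + (N - j) : ℕ) : ℝ) ≤ ((m + 1 + (N - i) : ℕ) : ℝ) := by
        exact_mod_cast (by omega : m + 1 + (N - j) ≤ m + 1 + (N - i))
      exact inv_anti₀ (hden_pos j) this
    have us : ∀ i, u i ∈ DD ∩ Set.Ioo 0 ((m:ℝ)⁻¹) := by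
      intro i
      refine ⟨inv_nat_mem_DD (by omega), hu_pos i, ?_⟩
      apply inv_strictAnti₀ hmpos
      exact_mod_cast (by omega : m < m + 1 + (N - i))
    have hG : ∀ i, G c (u i) = (c:ℝ) * u i := by
      intro i
      rw [G, hu_def]
      simp only []
      rw [pE_inv_nat (by omega : 1 ≤ m + 1 + (N - i)), add_zero]
    have hsum : ∑ i ∈ Finset.range N, edist (G c (u (i+1))) (G c (u i))
        = ENNReal.ofReal ((c:ℝ) * u N - (c:ℝ) * u 0) := by
      have h1 : ∀ i ∈ Finset.range N, edist (G c (u (i+1))) (G c (u i))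
          = ENNReal.ofReal ((c:ℝ) * u (i+1) - (c:ℝ) * u i) := by
        intro i _
        rw [hG, hG, edist_dist, Real.dist_eq,
          abs_of_nonneg (by nlinarith [hu (Nat.le_succ i)] : (0:ℝ) ≤ (c:ℝ) * u (i+1) - (c:ℝ) * u i)]
      rw [Finset.sum_congr rfl h1, ← ENNReal.ofReal_sum_of_nonneg
        (fun i _ => by nlinarith [hu (Nat.le_succ i)])]
      congr 1
      exact Finset.sum_range_sub (fun i => (c:ℝ) * u i) N
    have := eVariationOn.sum_le (f := G c) (n := N) hu us
    rw [hsum] at this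
    refine le_trans (le_of_eq ?_) this
    congr 1
    have huN : u N = (((m:ℝ))+1)⁻¹ := by
      rw [hu_def]; simp only [Nat.sub_self, Nat.add_zero]; push_cast; ring_nf
    have hu0 : u 0 = ((m:ℝ)+1+(N:ℝ))⁻¹ := by
      rw [hu_def]; simp only [Nat.sub_zero]; push_cast; ring_nf
    rw [huN, hu0]; ring
  -- take the limit N → ∞
  have htend : Filter.Tendsto
      (fun N : ℕ => ENNReal.ofReal ((c:ℝ) * (((m:ℝ)+1)⁻¹ - ((m:ℝ)+1+(N:ℝ))⁻¹)))
      Filter.atTop (nhds (ENNReal.ofReal ((c:ℝ) / ((m:ℝ)+1)))) := by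
    have h0 : Filter.Tendsto (fun N : ℕ => ((m:ℝ)+1+(N:ℝ))⁻¹) Filter.atTop (nhds 0) := by
      apply Filter.Tendsto.inv_tendsto_atTop
      exact Filter.tendsto_atTop_add_const_left _ _ tendsto_natCast_atTop_atTop
    have : Filter.Tendsto (fun N : ℕ => (c:ℝ) * (((m:ℝ)+1)⁻¹ - ((m:ℝ)+1+(N:ℝ))⁻¹))
        Filter.atTop (nhds ((c:ℝ) * (((m:ℝ)+1)⁻¹ - 0))) :=
      (Filter.Tendsto.const_mul _ (tendsto_const_nhds.sub h0))
    rw [sub_zero, ← div_eq_mul_inv] at this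
    exact (ENNReal.continuous_ofReal.tendsto _).comp this
  exact le_of_tendsto htend (Filter.Eventually.of_forall key)
lemma phi_facts {k : ℕ} (hk : 1 ≤ k) {y : ℝ} (hy0 : 0 < y) (hy1 : y < ((k:ℝ)+1)⁻¹) :
    ((k:ℝ)+1)⁻¹ < (1 - y)/k ∧ (1 - y)/k < (k:ℝ)⁻¹ ∧ pT ((1 - y)/k) = y := by
  have hkpos : (0:ℝ) < k := by exact_mod_cast hk
  have hk1pos : (0:ℝ) < (k:ℝ) + 1 := by linarith
  set x := (1 - y)/k with hxdef
  have hy1' : y < 1 := lt_trans hy1 (by rw [inv_lt_one_iff₀]; right; linarith)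
  have hxpos : 0 < x := by apply div_pos; linarith; exact hkpos
  have hxlt : x < (k:ℝ)⁻¹ := by
    rw [div_lt_iff₀ hkpos, inv_mul_cancel₀ hkpos.ne']; linarith
  have hxgt : ((k:ℝ)+1)⁻¹ < x := by
    rw [inv_lt_iff_one_lt_mul₀ hk1pos, hxdef, div_mul_eq_mul_div, lt_div_iff₀ hkpos]
    have h2 : y * ((k:ℝ)+1) < 1 := by
      have h3 := mul_lt_mul_of_pos_right hy1 hk1pos
      rwa [inv_mul_cancel₀ hk1pos.ne'] at h3
    nlinarith
  have hfloor : ⌊x⁻¹⌋₊ = k := by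
    have h1 : (k:ℝ) ≤ x⁻¹ := by
      rw [le_inv_comm₀ hkpos hxpos]; exact hxlt.le
    have h2 : x⁻¹ < (k:ℝ) + 1 := by
      rw [inv_lt_comm₀ (by positivity) hk1pos]
      exact hxgt
    rw [Nat.floor_eq_iff (by positivity)]
    refine ⟨by exact_mod_cast h1, by push_cast; exact h2⟩
  refine ⟨hxgt, hxlt, ?_⟩
  rw [pT, if_neg hxpos.ne', hfloor, hxdef]
  field_simp
  ring

lemma step (c m : ℕ) (hm : 1 ≤ m) :
    VV c (m+1) + ENNReal.ofReal ((m:ℝ))⁻¹ * VV (c+1) (m+1) ≤ VV c m := by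
  have hmpos : (0:ℝ) < m := by exact_mod_cast hm
  have hcast : (((m+1 : ℕ)) : ℝ) = (m:ℝ) + 1 := by push_cast; ring
  set S' : Set ℝ := DD ∩ Set.Ioo 0 ((((m+1 : ℕ)) : ℝ))⁻¹ with hS'
  set t : Set ℝ := DD ∩ Set.Ioo (((m:ℝ)+1)⁻¹) ((m:ℝ)⁻¹) with ht
  set φ : ℝ → ℝ := fun y => (1 - y)/m with hφ
  have hfacts : ∀ y ∈ S', ((m:ℝ)+1)⁻¹ < φ y ∧ φ y < (m:ℝ)⁻¹ ∧ pT (φ y) = y := by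
    rintro y ⟨hyD, hy0, hy1⟩
    exact phi_facts hm hy0 (by rwa [hcast] at hy1)
  have hmaps : Set.MapsTo φ S' t := by
    rintro y hy
    obtain ⟨h1, h2, h3⟩ := hfacts y hy
    obtain ⟨⟨l, hl⟩, _, _⟩ := hy
    exact ⟨⟨l+1, by rw [Function.iterate_succ_apply, h3, hl]⟩, h1, h2⟩
  have hanti : AntitoneOn φ S' := by
    intro a _ b _ hab
    simp only [hφ]
    have h1 : 1 - b ≤ 1 - a := by linarith
    gcongr
  have comp_le : eVariationOn (G c ∘ φ) S' ≤ eVariationOn (G c) t :=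
    eVariationOn.comp_le_of_antitoneOn _ φ hanti hmaps
  have heq : eVariationOn (G c ∘ φ) S' =
      eVariationOn (fun y => (c:ℝ)/m - (m:ℝ)⁻¹ * G (c+1) y) S' := by
    apply eVariationOn.eq_of_eqOn
    rintro y ⟨hyD, hy0, hy1⟩
    have hfe := funEq hm hy0 (by rwa [hcast] at hy1) hyD
    simp only [Function.comp_apply, G, hφ]
    rw [hfe]
    push_cast
    field_simp
    ring
  have haff : ENNReal.ofReal ((m:ℝ))⁻¹ * VV (c+1) (m+1) ≤ eVariationOn (G c) t := by
    calc ENNReal.ofReal ((m:ℝ))⁻¹ * VV (c+1) (m+1)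
        ≤ eVariationOn (fun y => (c:ℝ)/m - (m:ℝ)⁻¹ * G (c+1) y) S' :=
          evar_affine_le _ _ (by positivity) _ _
      _ = eVariationOn (G c ∘ φ) S' := heq.symm
      _ ≤ eVariationOn (G c) t := comp_le
  have horder : ∀ a ∈ S', ∀ b ∈ t, a ≤ b := by
    rintro a ⟨_, _, ha⟩ b ⟨_, hb, _⟩
    rw [hcast] at ha
    linarith
  have hsub : S' ∪ t ⊆ DD ∩ Set.Ioo 0 ((m:ℝ)⁻¹) := by
    rintro x (⟨hD, h0, h1⟩ | ⟨hD, h0, h1⟩)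
    · refine ⟨hD, h0, ?_⟩
      rw [hcast] at h1
      have : ((m:ℝ)+1)⁻¹ < (m:ℝ)⁻¹ := by
        apply inv_strictAnti₀ hmpos; linarith
      linarith
    · refine ⟨hD, ?_, h1⟩
      have : (0:ℝ) < ((m:ℝ)+1)⁻¹ := by positivity
      linarith
  calc VV c (m+1) + ENNReal.ofReal ((m:ℝ))⁻¹ * VV (c+1) (m+1)
      ≤ eVariationOn (G c) S' + eVariationOn (G c) t := add_le_add le_rfl haff
    _ ≤ eVariationOn (G c) (S' ∪ t) := eVariationOn.add_le_union _ horder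
    _ ≤ VV c m := eVariationOn.mono _ hsub
lemma chain (c : ℕ) : ∀ (M m : ℕ), 1 ≤ m →
    ∑ k ∈ Finset.Ico m (m+M), ENNReal.ofReal ((k:ℝ))⁻¹ * VV (c+1) (k+1) ≤ VV c m := by
  intro M
  induction M with
  | zero => intro m hm; simp
  | succ M ih =>
    intro m hm
    rw [Finset.sum_eq_sum_Ico_succ_bot (by omega : m < m + (M+1))]
    have h2 : ∑ k ∈ Finset.Ico (m+1) (m + (M+1)), ENNReal.ofReal ((k:ℝ))⁻¹ * VV (c+1) (k+1)
        ≤ VV c (m+1) := by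
      have := ih (m+1) (by omega)
      rwa [show (m+1) + M = m + (M+1) by omega] at this
    calc ENNReal.ofReal ((m:ℝ))⁻¹ * VV (c+1) (m+1)
          + ∑ k ∈ Finset.Ico (m+1) (m + (M+1)), ENNReal.ofReal ((k:ℝ))⁻¹ * VV (c+1) (k+1)
        ≤ ENNReal.ofReal ((m:ℝ))⁻¹ * VV (c+1) (m+1) + VV c (m+1) := add_le_add le_rfl h2
      _ = VV c (m+1) + ENNReal.ofReal ((m:ℝ))⁻¹ * VV (c+1) (m+1) := add_comm _ _
      _ ≤ VV c m := step c m hm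

lemma real_lb (C : ℝ) (hC : 0 ≤ C) (m : ℕ) (hm : 1 ≤ m) : ∀ M : ℕ,
    C * (((m:ℝ)+1)⁻¹ - ((m:ℝ)+(M:ℝ)+1)⁻¹)
      ≤ ∑ k ∈ Finset.Ico m (m+M), (k:ℝ)⁻¹ * (C / ((k:ℝ)+2)) := by
  have hmpos : (0:ℝ) < m := by exact_mod_cast hm
  intro M
  induction M with
  | zero => simp
  | succ M ih =>
    rw [show m + (M+1) = (m+M) + 1 by omega, Finset.sum_Ico_succ_top (by omega : m ≤ m + M)]
    set a : ℝ := (m:ℝ) + (M:ℝ) with ha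
    have hapos : 0 < a := by positivity
    have hcast : ((m + M : ℕ) : ℝ) = a := by push_cast; ring
    have hterm : C * ((a+1)⁻¹ - (a+2)⁻¹) ≤ ((m+M:ℕ):ℝ)⁻¹ * (C / (((m+M:ℕ):ℝ)+2)) := by
      rw [hcast]
      have e1 : (a+1)⁻¹ - (a+2)⁻¹ = ((a+1)*(a+2))⁻¹ := by
        field_simp
        norm_num
      have e2 : a⁻¹ * (C / (a+2)) = C * (a*(a+2))⁻¹ := by
        rw [mul_inv, div_eq_mul_inv]
        ring
      rw [e1, e2]
      apply mul_le_mul_of_nonneg_left _ hC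
      apply inv_anti₀ (by positivity)
      nlinarith
    have hgoal : C * (((m:ℝ)+1)⁻¹ - ((m:ℝ)+((M:ℝ)+1)+1)⁻¹)
        = C * (((m:ℝ)+1)⁻¹ - (a+1)⁻¹) + C * ((a+1)⁻¹ - (a+2)⁻¹) := by
      push_cast; rw [ha]; ring_nf
    push_cast
    push_cast at hgoal ih hterm ⊢
    linarith [ih, hterm]

lemma main : ∀ (n c m : ℕ), 1 ≤ m →
    ENNReal.ofReal (((c:ℝ)+(n:ℝ)) / ((m:ℝ)+1)) ≤ VV c m := by
  intro n
  induction n with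
  | zero => intro c m hm; simpa using base c m hm
  | succ n ih =>
    intro c m hm
    set C : ℝ := (c:ℝ) + (n:ℝ) + 1 with hC
    have hCpos : 0 ≤ C := by positivity
    have key : ∀ M : ℕ,
        ENNReal.ofReal (C * (((m:ℝ)+1)⁻¹ - ((m:ℝ)+(M:ℝ)+1)⁻¹)) ≤ VV c m := by
      intro M
      have h1 := real_lb C hCpos m hm M
      refine le_trans (ENNReal.ofReal_le_ofReal h1) ?_
      rw [ENNReal.ofReal_sum_of_nonneg (fun k hk => by
        have hk1 : 1 ≤ k := le_trans hm (Finset.mem_Ico.mp hk).1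
        have : (0:ℝ) < k := by exact_mod_cast hk1
        positivity)]
      refine le_trans (Finset.sum_le_sum fun k hk => ?_) (chain c M m hm)
      have hk1 : 1 ≤ k := le_trans hm (Finset.mem_Ico.mp hk).1
      have hkpos : (0:ℝ) < k := by exact_mod_cast hk1
      rw [ENNReal.ofReal_mul (by positivity)]
      apply mul_le_mul_of_nonneg_left _ (by positivity)
      have := ih (c+1) (k+1) (by omega)
      refine le_trans (le_of_eq ?_) this
      congr 1
      push_cast
      ring
    have htend : Filter.Tendsto
        (fun M : ℕ => ENNReal.ofReal (C * (((m:ℝ)+1)⁻¹ - ((m:ℝ)+(M:ℝ)+1)⁻¹)))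
        Filter.atTop (nhds (ENNReal.ofReal (((c:ℝ)+((n:ℕ)+1:ℕ)) / ((m:ℝ)+1)))) := by
      have h0 : Filter.Tendsto (fun M : ℕ => ((m:ℝ)+(M:ℝ)+1)⁻¹) Filter.atTop (nhds 0) := by
        apply Filter.Tendsto.inv_tendsto_atTop
        apply Filter.tendsto_atTop_add_const_right
        exact Filter.tendsto_atTop_add_const_left _ _ tendsto_natCast_atTop_atTop
      have h2 : Filter.Tendsto (fun M : ℕ => C * (((m:ℝ)+1)⁻¹ - ((m:ℝ)+(M:ℝ)+1)⁻¹))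
          Filter.atTop (nhds (C * (((m:ℝ)+1)⁻¹ - 0))) :=
        Filter.Tendsto.const_mul _ (tendsto_const_nhds.sub h0)
      have h3 : C * (((m:ℝ)+1)⁻¹ - 0) = ((c:ℝ)+((n:ℕ)+1:ℕ)) / ((m:ℝ)+1) := by
        rw [hC, sub_zero, div_eq_mul_inv]; push_cast; ring
      rw [h3] at h2
      exact (ENNReal.continuous_ofReal.tendsto _).comp h2
    exact le_of_tendsto htend (Filter.Eventually.of_forall key)
theorem stmt15 : ¬ BoundedVariationOn pE (Set.Icc (0 : ℝ) 1) := by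
  intro h
  have hVle : VV 0 1 ≤ eVariationOn pE (Set.Icc (0 : ℝ) 1) := by
    have h1 : VV 0 1 = eVariationOn pE (DD ∩ Set.Ioo 0 (((1:ℕ):ℝ))⁻¹) :=
      eVariationOn.eq_of_eqOn (fun x _ => by simp [G])
    rw [h1]
    apply eVariationOn.mono
    intro x hx
    obtain ⟨_, hx0, hx1⟩ := hx
    simp only [Nat.cast_one, inv_one] at hx1
    exact ⟨hx0.le, hx1.le⟩
  have hbig : ∀ n : ℕ, ENNReal.ofReal ((n:ℝ) / 2) ≤ eVariationOn pE (Set.Icc (0 : ℝ) 1) := by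
    intro n
    have := main n 0 1 le_rfl
    have h2 : (((0:ℕ):ℝ) + (n:ℝ)) / (((1:ℕ):ℝ) + 1) = (n:ℝ)/2 := by push_cast; ring
    rw [h2] at this
    exact le_trans this hVle
  rw [BoundedVariationOn] at h
  obtain ⟨n, hn⟩ := exists_nat_gt ((eVariationOn pE (Set.Icc (0 : ℝ) 1)).toReal * 2)
  have := (ENNReal.ofReal_le_iff_le_toReal h).mp (hbig n)
  linarith
end
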